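/- Let U(n,F_q) be the group of lower unitriangular matrices acting on A = F_q[x_1,...,x_n] (each g ∈ U(n,F_q) sends x_i to x_i plus a linear combination of x_1,...,x_{i-1}). Then for every g ∈ U(n,F_q) and every l, the endomorphism ψ_l commutes with the action of g: g ∘ ψ_l = ψ_l ∘ g on A. -/

import Mathlib

open MvPolynomial Finset

/-- The `F`-algebra endomorphism `ψ_l` of `F[x_1,…,x_n]` sending each variable `x_i` to
`F_{l,q}(x_i) = ∏_{u ∈ span(x_1,…,x_l)} (x_i - u)`. -/
noncomputable def psi (F : Type*) [Field F] [Fintype F] (n l : ℕ) (h : l ≤ n) :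
    MvPolynomial (Fin n) F →ₐ[F] MvPolynomial (Fin n) F :=
  MvPolynomial.aeval fun i =>
    ∏ c : Fin l → F, (MvPolynomial.X i - ∑ j, c j • MvPolynomial.X (Fin.castLE h j))

/-- The product `∏_{v ∈ G} (y - S v)` over a finite additive group embedded injectively
into a domain is additive in `y`. -/
lemma prod_sub_add {R : Type*} [CommRing R] [IsDomain R] {G : Type*} [AddCommGroup G]
    [Fintype G] (S : G →+ R) (hS : Function.Injective S) (y z : R) :
    ∏ c : G, (y + z - S c) = (∏ c : G, (y - S c)) + ∏ c : G, (z - S c) := by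
  classical
  set N := Fintype.card G with hNdef
  have hN : 0 < N := Fintype.card_pos
  set A : Polynomial R := ∏ c : G, (Polynomial.X + Polynomial.C (y - S c)) with hA
  set B : Polynomial R := ∏ c : G, (Polynomial.X - Polynomial.C (S c)) with hB
  have hAm : A.Monic := Polynomial.monic_prod_of_monic _ _ fun c _ => Polynomial.monic_X_add_C _
  have hBm : B.Monic := Polynomial.monic_prod_of_monic _ _ fun c _ => Polynomial.monic_X_sub_C _
  have hAdeg : A.natDegree = N := by
    rw [hA, Polynomial.natDegree_prod_of_monic _ _ fun c _ => Polynomial.monic_X_add_C _]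
    simp only [Polynomial.natDegree_X_add_C, Finset.sum_const, Finset.card_univ, smul_eq_mul,
      mul_one]
    exact hNdef.symm
  have hBdeg : B.natDegree = N := by
    rw [hB, Polynomial.natDegree_prod_of_monic _ _ fun c _ => Polynomial.monic_X_sub_C _]
    simp only [Polynomial.natDegree_X_sub_C, Finset.sum_const, Finset.card_univ, smul_eq_mul,
      mul_one]
    exact hNdef.symm
  set P : Polynomial R := A - B - Polynomial.C (∏ c : G, (y - S c)) with hP
  have hevalA : ∀ w : R, A.eval w = ∏ c : G, (w + (y - S c)) := by
    intro w; rw [hA, Polynomial.eval_prod]; simp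
  have hevalB : ∀ w : R, B.eval w = ∏ c : G, (w - S c) := by
    intro w; rw [hB, Polynomial.eval_prod]; simp
  have heval : ∀ d : G, P.eval (S d) = 0 := by
    intro d
    have h1 : A.eval (S d) = ∏ c : G, (y - S c) := by
      rw [hevalA]
      rw [← Equiv.prod_comp (Equiv.addRight d) (fun c => S d + (y - S c))]
      refine Finset.prod_congr rfl fun c _ => ?_
      simp only [Equiv.coe_addRight, map_add]
      ring
    have h2 : B.eval (S d) = 0 := by
      rw [hevalB]
      exact Finset.prod_eq_zero (Finset.mem_univ d) (by simp)
    rw [hP, Polynomial.eval_sub, Polynomial.eval_sub, Polynomial.eval_C, h1, h2]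
    ring
  have hdeglt : P.natDegree < N := by
    have hAdeg' : A.degree = (N : WithBot ℕ) := by
      rw [Polynomial.degree_eq_natDegree hAm.ne_zero, hAdeg]
    have hBdeg' : B.degree = (N : WithBot ℕ) := by
      rw [Polynomial.degree_eq_natDegree hBm.ne_zero, hBdeg]
    have hAB : (A - B).degree < (N : WithBot ℕ) := by
      have := Polynomial.degree_sub_lt (hAdeg'.trans hBdeg'.symm)
        hAm.ne_zero (by rw [hAm.leadingCoeff, hBm.leadingCoeff])
      rwa [hAdeg'] at this
    have hC : (Polynomial.C (∏ c : G, (y - S c))).degree < (N : WithBot ℕ) :=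
      lt_of_le_of_lt Polynomial.degree_C_le (by exact_mod_cast WithBot.coe_lt_coe.mpr hN)
    have hPdeg : P.degree < (N : WithBot ℕ) :=
      lt_of_le_of_lt (Polynomial.degree_sub_le _ _) (max_lt hAB hC)
    rcases eq_or_ne P 0 with h0 | h0
    · simpa [h0] using hN
    · exact (Polynomial.natDegree_lt_iff_degree_lt h0).mpr hPdeg
  have hP0 : P = 0 :=
    Polynomial.eq_zero_of_natDegree_lt_card_of_eval_eq_zero P hS heval (by simpa using hdeglt)
  have hz := congrArg (Polynomial.eval z) hP0
  simp only [hP, Polynomial.eval_sub, Polynomial.eval_C, Polynomial.eval_zero, hevalA, hevalB,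
    sub_eq_zero] at hz
  have h3 : ∏ c : G, (z + (y - S c)) = ∏ c : G, (y + z - S c) :=
    Finset.prod_congr rfl fun c _ => by ring
  rw [h3, sub_eq_iff_eq_add] at hz
  rw [hz, add_comm]

/-- Scalar compatibility of the product `∏_{v ∈ G} (y - S v)`. -/
lemma prod_sub_smul {F R : Type*} [Field F] [Fintype F] [CommRing R] [Algebra F R] {G : Type*}
    [AddCommGroup G] [Module F G] [Fintype G] (S : G →ₗ[F] R) (a : F) (y : R)
    (hcard : ∀ b : F, b ^ Fintype.card G = b) :
    ∏ c : G, (a • y - S c) = a • ∏ c : G, (y - S c) := by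
  classical
  rcases eq_or_ne a 0 with rfl | ha
  · rw [zero_smul, zero_smul]
    exact Finset.prod_eq_zero (Finset.mem_univ 0) (by simp)
  · have h1 : ∏ c : G, (a • y - S c) = ∏ c : G, (a • y - S (a • c)) := by
      refine (Equiv.prod_comp
        (⟨fun c => a • c, fun c => a⁻¹ • c,
          fun c => by simp [smul_smul, inv_mul_cancel₀ ha],
          fun c => by simp [smul_smul, mul_inv_cancel₀ ha]⟩ : G ≃ G)
        (fun c => a • y - S c)).symm
    rw [h1]
    have h2 : ∀ c : G, a • y - S (a • c) = algebraMap F R a * (y - S c) := by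
      intro c
      rw [map_smul, ← smul_sub, Algebra.smul_def]
    simp only [h2]
    rw [Finset.prod_mul_distrib, Finset.prod_const, ← map_pow, Finset.card_univ, hcard,
      Algebra.smul_def]

theorem stmt_4 (F : Type*) [Field F] [Fintype F] (n l : ℕ) (h : l ≤ n)
    (g : Matrix (Fin n) (Fin n) F)
    (hlow : ∀ i j : Fin n, i < j → g i j = 0) (hdiag : ∀ i, g i i = 1) :
    (MvPolynomial.aeval (R := F) fun i => ∑ j, g i j • MvPolynomial.X j).comp (psi F n l h)
      = (psi F n l h).comp (MvPolynomial.aeval (R := F) fun i => ∑ j, g i j • MvPolynomial.X j) := by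
  classical
  set S : (Fin l → F) →ₗ[F] MvPolynomial (Fin n) F :=
    { toFun := fun c => ∑ j, c j • X (Fin.castLE h j)
      map_add' := fun c d => by
        simp [add_smul, Finset.sum_add_distrib]
      map_smul' := fun a c => by
        simp [smul_smul, Finset.smul_sum] } with hSdef
  have hSapp : ∀ c : Fin l → F, S c = ∑ j, c j • X (Fin.castLE h j) := fun c => rfl
  have hSinj : Function.Injective S := by
    intro c d hcd
    funext j
    have hev := congrArg
      (MvPolynomial.eval fun k : Fin n => if k = Fin.castLE h j then (1 : F) else 0) hcd
    simp only [hSapp, map_sum, smul_eq_C_mul, map_mul, eval_C, eval_X] at hev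
    rw [Finset.sum_eq_single j
        (fun b _ hb => by simp [(Fin.castLE_injective h).ne_iff, hb]) (by simp),
      Finset.sum_eq_single j
        (fun b _ hb => by simp [(Fin.castLE_injective h).ne_iff, hb]) (by simp)] at hev
    simpa using hev
  have hcard : ∀ b : F, b ^ Fintype.card (Fin l → F) = b := by
    intro b
    rw [Fintype.card_fun, Fintype.card_fin]
    exact FiniteField.pow_card_pow l b
  set Phi : MvPolynomial (Fin n) F → MvPolynomial (Fin n) F :=
    fun y => ∏ c : Fin l → F, (y - S c) with hPhidef
  have hPhi_add : ∀ y z, Phi (y + z) = Phi y + Phi z := fun y z =>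
    prod_sub_add S.toAddMonoidHom hSinj y z
  have hPhi_smul : ∀ (a : F) y, Phi (a • y) = a • Phi y := fun a y =>
    prod_sub_smul S a y hcard
  have hPhi_zero : Phi 0 = 0 :=
    Finset.prod_eq_zero (Finset.mem_univ 0) (by simp)
  have hPhi_sum : ∀ (s : Finset (Fin n)) (f : Fin n → MvPolynomial (Fin n) F),
      Phi (∑ i ∈ s, f i) = ∑ i ∈ s, Phi (f i) := by
    intro s f
    induction s using Finset.induction_on with
    | empty => simpa using hPhi_zero
    | @insert a s' hnot ih =>
        rw [Finset.sum_insert hnot, hPhi_add, ih, Finset.sum_insert hnot]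
  have hpsiX : ∀ i : Fin n, psi F n l h (X i) = Phi (X i) := fun i => aeval_X _ i
  set G : MvPolynomial (Fin n) F →ₐ[F] MvPolynomial (Fin n) F :=
    MvPolynomial.aeval (R := F) fun i => ∑ j, g i j • MvPolynomial.X j with hGdef
  have hGX : ∀ i : Fin n, G (X i) = ∑ j, g i j • X j := fun i => aeval_X _ i
  set T : (Fin l → F) → (Fin l → F) :=
    fun c k => ∑ j, c j * g (Fin.castLE h j) (Fin.castLE h k) with hTdef
  have hGS : ∀ c : Fin l → F, G (S c) = S (T c) := by
    intro c
    rw [hSapp, map_sum]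
    simp only [map_smul, hGX]
    have lhs_eq : (∑ j : Fin l, c j • ∑ k : Fin n, g (Fin.castLE h j) k • (X k : MvPolynomial (Fin n) F))
        = ∑ k : Fin n, (∑ j : Fin l, c j * g (Fin.castLE h j) k) • X k := by
      simp only [Finset.smul_sum, smul_smul]
      rw [Finset.sum_comm]
      exact Finset.sum_congr rfl fun k _ => (Finset.sum_smul).symm
    rw [lhs_eq, hSapp]
    have hvanish : ∀ k : Fin n,
        k ∉ (Finset.univ.map ⟨Fin.castLE h, Fin.castLE_injective h⟩ : Finset (Fin n)) →
        (∑ j : Fin l, c j * g (Fin.castLE h j) k) • (X k : MvPolynomial (Fin n) F) = 0 := by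
      intro k hk
      have hkl : l ≤ (k : ℕ) := by
        by_contra hkl
        exact hk (Finset.mem_map.mpr
          ⟨⟨(k : ℕ), not_le.mp hkl⟩, Finset.mem_univ _, Fin.ext rfl⟩)
      have hz : (∑ j : Fin l, c j * g (Fin.castLE h j) k) = 0 := by
        refine Finset.sum_eq_zero fun j _ => ?_
        rw [hlow (Fin.castLE h j) k (by
          rw [Fin.lt_def]
          simpa using lt_of_lt_of_le j.isLt hkl), mul_zero]
      rw [hz, zero_smul]
    rw [← Finset.sum_subset (Finset.subset_univ _) (fun k _ hk => hvanish k hk),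
      Finset.sum_map]
    rfl
  have hker : ∀ c : Fin l → F, T c = 0 → c = 0 := by
    intro c hc
    by_contra hcne
    have hs : (Finset.univ.filter fun j => c j ≠ 0).Nonempty := by
      rcases Function.ne_iff.mp hcne with ⟨j, hj⟩
      exact ⟨j, Finset.mem_filter.mpr ⟨Finset.mem_univ j, by simpa using hj⟩⟩
    set j0 := (Finset.univ.filter fun j => c j ≠ 0).max' hs with hj0
    have hj0mem : c j0 ≠ 0 :=
      (Finset.mem_filter.mp ((Finset.univ.filter fun j => c j ≠ 0).max'_mem hs)).2
    have hzero : T c j0 = 0 := by rw [hc]; rfl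
    rw [hTdef] at hzero
    simp only at hzero
    rw [Finset.sum_eq_single j0 (fun b _ hb => ?_) (by simp)] at hzero
    · rw [hdiag, mul_one] at hzero
      exact hj0mem hzero
    · rcases lt_or_gt_of_ne hb with hlt | hgt
      · rw [hlow (Fin.castLE h b) (Fin.castLE h j0) (by rw [Fin.lt_def]; simpa using hlt),
          mul_zero]
      · have hcb : c b = 0 := by
          by_contra hcb
          exact absurd ((Finset.univ.filter fun j => c j ≠ 0).le_max'
            b (Finset.mem_filter.mpr ⟨Finset.mem_univ b, hcb⟩)) (not_le.mpr hgt)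
        rw [hcb, zero_mul]
  have hTinj : Function.Injective T := by
    have hTsub : ∀ c d : Fin l → F, T (c - d) = T c - T d := by
      intro c d
      funext k
      simp only [hTdef, Pi.sub_apply, sub_mul, Finset.sum_sub_distrib]
    intro c d hcd
    have h0 : T (c - d) = 0 := by rw [hTsub, hcd, sub_self]
    exact sub_eq_zero.mp (hker (c - d) h0)
  have hTbij : Function.Bijective T := Finite.injective_iff_bijective.mp hTinj
  apply MvPolynomial.algHom_ext
  intro i
  rw [AlgHom.comp_apply, AlgHom.comp_apply, hpsiX]
  calc G (Phi (X i))
      = ∏ c : Fin l → F, (G (X i) - G (S c)) := by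
        rw [hPhidef]
        simp only
        rw [map_prod]
        simp only [map_sub]
    _ = ∏ c : Fin l → F, (G (X i) - S (T c)) := by
        exact Finset.prod_congr rfl fun c _ => by rw [hGS]
    _ = ∏ c : Fin l → F, (G (X i) - S c) :=
        Fintype.prod_bijective T hTbij _ _ (fun c => rfl)
    _ = Phi (G (X i)) := rfl
    _ = Phi (∑ j, g i j • X j) := by rw [hGX]
    _ = ∑ j, g i j • Phi (X j) := by
        rw [hPhi_sum]
        exact Finset.sum_congr rfl fun j _ => (hPhi_smul _ _)
    _ = ∑ j, g i j • psi F n l h (X j) := by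
        exact Finset.sum_congr rfl fun j _ => by rw [hpsiX]
    _ = psi F n l h (∑ j, g i j • X j) := by
        rw [map_sum]
        exact Finset.sum_congr rfl fun j _ => by rw [map_smul]
    _ = psi F n l h (G (X i)) := by rw [hGX]
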